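/- Let λ ∈ ℝ, k = √(λ²+1) > 0, c ∈ ℂ \ {0}, and u(x) = c·exp(2ikx + 4ikλt) for a fixed t. With ψ₁, ψ₂ the plane-wave Baker eigenfunctions as above, set F(x) = c ψ₁(x,t)² + c̄ · conj(ψ₂(x,t))². Then F(x) = e^{2it} (u + ū (k+λ)²)/(k+λ+1)², F never vanishes, and Im( F'(x)/F(x) ) = −4kλ|c|² (k+λ)(1+(k+λ)²) / |u + (k+λ)² ū|². -/

import Mathlib

open Complex

lemma aux_im (w : ℂ) (m k : ℝ) (hD : w + (m:ℂ) * (starRingEnd ℂ) w ≠ 0) :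
    ((2 * I * (k:ℂ) * (w - (m:ℂ) * (starRingEnd ℂ) w)) / (w + (m:ℂ) * (starRingEnd ℂ) w)).im
      = 2 * k * (1 - m^2) * Complex.normSq w / Complex.normSq (w + (m:ℂ) * (starRingEnd ℂ) w) := by
  have hn : Complex.normSq (w + (m:ℂ) * (starRingEnd ℂ) w) ≠ 0 := by
    simpa [Complex.normSq_eq_zero] using hD
  rw [Complex.div_im, div_sub_div_same, div_eq_div_iff hn hn]
  simp only [Complex.normSq_apply, Complex.mul_re, Complex.mul_im, Complex.add_re,
    Complex.add_im, Complex.sub_re, Complex.sub_im, Complex.ofReal_re, Complex.ofReal_im,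
    Complex.I_re, Complex.I_im, Complex.conj_re, Complex.conj_im, Complex.re_ofNat,
    Complex.im_ofNat]
  ring

/-- For the plane-wave squared eigenfunction combination
`F = c ψ₁² + c̄ (ψ̄₂)²` with `u(x) = c e^{2ikx+4ikλt}`, one has the closed form
`F = e^{2it}(u + ū(k+λ)²)/(k+λ+1)²`, `F` never vanishes, and
`Im(F'/F) = −4kλ|c|²(k+λ)(1+(k+λ)²)/|u+(k+λ)²ū|²`. -/
theorem stmt9 (lam : ℝ) (k : ℝ) (hk : k = Real.sqrt (lam ^ 2 + 1))
    (c : ℂ) (hc : c ≠ 0) (t : ℝ)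
    (ψ₁ ψ₂ : ℝ → ℝ → ℂ)
    (hψ₁ : ∀ x t, ψ₁ x t =
      Complex.exp (Complex.I * ((k : ℂ) * x + 2 * (k : ℂ) * (lam : ℂ) * t + t))
        / ((k : ℂ) + (lam : ℂ) + 1))
    (hψ₂ : ∀ x t, ψ₂ x t = ((k : ℂ) + (lam : ℂ)) *
      Complex.exp (Complex.I * ((k : ℂ) * x + 2 * (k : ℂ) * (lam : ℂ) * t - t))
        / ((k : ℂ) + (lam : ℂ) + 1))
    (u : ℝ → ℂ)
    (hu : ∀ x, u x = c * Complex.exp (2 * Complex.I * (k : ℂ) * x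
      + 4 * Complex.I * (k : ℂ) * (lam : ℂ) * t))
    (hne : ∀ x, u x + ((k : ℂ) + (lam : ℂ)) ^ 2 * (starRingEnd ℂ) (u x) ≠ 0)
    (F : ℝ → ℂ)
    (hF : ∀ x, F x = c * (ψ₁ x t) ^ 2 + (starRingEnd ℂ) c * ((starRingEnd ℂ) (ψ₂ x t)) ^ 2) :
    ∀ x,
      F x = Complex.exp (2 * Complex.I * (t : ℂ)) *
          (u x + (starRingEnd ℂ) (u x) * ((k : ℂ) + (lam : ℂ)) ^ 2)
          / ((k : ℂ) + (lam : ℂ) + 1) ^ 2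
      ∧ F x ≠ 0
      ∧ (deriv F x / F x).im =
          -4 * k * lam * (‖c‖) ^ 2 * (k + lam) * (1 + (k + lam) ^ 2)
            / (‖(u x + ((k : ℂ) + (lam : ℂ)) ^ 2 * (starRingEnd ℂ) (u x))‖) ^ 2 := by
  have hk2 : k ^ 2 = lam ^ 2 + 1 := by
    rw [hk]; exact Real.sq_sqrt (by positivity)
  have hkpos : 0 < k := by
    rw [hk]; exact Real.sqrt_pos.mpr (by positivity)
  have hkl : 0 < k + lam := by nlinarith
  have hd : ((k:ℂ) + (lam:ℂ) + 1) ≠ 0 := by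
    have h : ((k:ℂ) + (lam:ℂ) + 1) = ((k + lam + 1 : ℝ) : ℂ) := by push_cast; ring
    rw [h]
    exact_mod_cast (by positivity : (0:ℝ) < k + lam + 1).ne'
  -- conjugate of u
  have hcu : ∀ x : ℝ, (starRingEnd ℂ) (u x) = (starRingEnd ℂ) c *
      Complex.exp (-(2 * Complex.I * (k:ℂ) * x + 4 * Complex.I * (k:ℂ) * (lam:ℂ) * t)) := by
    intro x
    rw [hu x, map_mul, ← Complex.exp_conj]
    congr 1
    simp only [map_add, map_mul, Complex.conj_I, Complex.conj_ofReal, map_ofNat]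
    ring
  -- closed form for F
  have h1 : ∀ x : ℝ, F x = Complex.exp (2 * Complex.I * (t : ℂ)) *
      (u x + (starRingEnd ℂ) (u x) * ((k : ℂ) + (lam : ℂ)) ^ 2)
      / ((k : ℂ) + (lam : ℂ) + 1) ^ 2 := by
    intro x
    rw [hF x, hψ₁ x t, hψ₂ x t, hcu x, hu x]
    rw [map_div₀, map_mul, ← Complex.exp_conj]
    have hc1 : (starRingEnd ℂ) ((k:ℂ) + (lam:ℂ)) = (k:ℂ) + (lam:ℂ) := by
      simp [Complex.conj_ofReal]
    have hc2 : (starRingEnd ℂ) ((k:ℂ) + (lam:ℂ) + 1) = (k:ℂ) + (lam:ℂ) + 1 := by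
      simp [Complex.conj_ofReal]
    have hcz : (starRingEnd ℂ) (Complex.I * ((k : ℂ) * x + 2 * (k : ℂ) * (lam : ℂ) * t - t))
        = -(Complex.I * ((k : ℂ) * x + 2 * (k : ℂ) * (lam : ℂ) * t - t)) := by
      simp only [map_mul, map_add, map_sub, Complex.conj_I, Complex.conj_ofReal, map_ofNat]
      ring
    rw [hc1, hc2, hcz]
    have e1 : Complex.exp (Complex.I * ((k : ℂ) * x + 2 * (k : ℂ) * (lam : ℂ) * t + t)) ^ 2
        = Complex.exp (2 * Complex.I * (k:ℂ) * x + 4 * Complex.I * (k:ℂ) * (lam:ℂ) * t)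
          * Complex.exp (2 * Complex.I * (t:ℂ)) := by
      rw [sq, ← Complex.exp_add, ← Complex.exp_add]; congr 1; ring
    have e2 : Complex.exp (-(Complex.I * ((k : ℂ) * x + 2 * (k : ℂ) * (lam : ℂ) * t - t))) ^ 2
        = Complex.exp (-(2 * Complex.I * (k:ℂ) * x + 4 * Complex.I * (k:ℂ) * (lam:ℂ) * t))
          * Complex.exp (2 * Complex.I * (t:ℂ)) := by
      rw [sq, ← Complex.exp_add, ← Complex.exp_add]; congr 1; ring
    rw [div_pow, div_pow, mul_pow, e1, e2]
    field_simp
  intro x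
  have hNne : u x + (starRingEnd ℂ) (u x) * ((k : ℂ) + (lam : ℂ)) ^ 2 ≠ 0 := by
    have h := hne x
    rwa [mul_comm] at h
  refine ⟨h1 x, ?_, ?_⟩
  · rw [h1 x]
    exact div_ne_zero (mul_ne_zero (Complex.exp_ne_zero _) hNne) (pow_ne_zero _ hd)
  -- derivative
  have hFfun : F = fun y : ℝ => Complex.exp (2 * Complex.I * (t:ℂ)) / ((k:ℂ) + (lam:ℂ) + 1) ^ 2 *
      (c * Complex.exp (2 * Complex.I * (k:ℂ) * y + 4 * Complex.I * (k:ℂ) * (lam:ℂ) * t)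
        + ((k:ℂ) + (lam:ℂ)) ^ 2 * ((starRingEnd ℂ) c *
          Complex.exp (-(2 * Complex.I * (k:ℂ) * y + 4 * Complex.I * (k:ℂ) * (lam:ℂ) * t)))) := by
    funext y
    rw [h1 y, hcu y, hu y]
    ring
  have h0 : HasDerivAt (fun y : ℝ => (y:ℂ)) 1 x := by
    simpa using (hasDerivAt_id x).ofReal_comp
  have hb : HasDerivAt (fun y : ℝ => 2 * Complex.I * (k:ℂ) * (y:ℂ)
      + 4 * Complex.I * (k:ℂ) * (lam:ℂ) * (t:ℂ)) (2 * Complex.I * (k:ℂ)) x := by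
    simpa using (h0.const_mul (2 * Complex.I * (k:ℂ))).add_const
      (4 * Complex.I * (k:ℂ) * (lam:ℂ) * (t:ℂ))
  have he1 := hb.cexp
  have he2 := hb.neg.cexp
  have hdF : HasDerivAt F (Complex.exp (2 * Complex.I * (t:ℂ)) / ((k:ℂ) + (lam:ℂ) + 1) ^ 2 *
      (2 * Complex.I * (k:ℂ) * (c * Complex.exp (2 * Complex.I * (k:ℂ) * x
          + 4 * Complex.I * (k:ℂ) * (lam:ℂ) * t)
        - ((k:ℂ) + (lam:ℂ)) ^ 2 * ((starRingEnd ℂ) c *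
          Complex.exp (-(2 * Complex.I * (k:ℂ) * x + 4 * Complex.I * (k:ℂ) * (lam:ℂ) * t)))))) x := by
    rw [hFfun]
    have h := (((he1.const_mul c).add
      (((he2.const_mul ((starRingEnd ℂ) c))).const_mul (((k:ℂ) + (lam:ℂ)) ^ 2))).const_mul
      (Complex.exp (2 * Complex.I * (t:ℂ)) / ((k:ℂ) + (lam:ℂ) + 1) ^ 2))
    convert h using 1
    · rfl
    · rfl
    · simp only [Pi.neg_apply]; ring
  have hm : (((k:ℂ) + (lam:ℂ)) ^ 2) = ((((k + lam) ^ 2 : ℝ)) : ℂ) := by push_cast; ring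
  have hw : deriv F x / F x =
      (2 * I * (k:ℂ) * (u x - (((k + lam) ^ 2 : ℝ):ℂ) * (starRingEnd ℂ) (u x)))
        / (u x + (((k + lam) ^ 2 : ℝ):ℂ) * (starRingEnd ℂ) (u x)) := by
    rw [hdF.deriv, h1 x, ← hu x, ← hcu x, ← hm]
    rw [div_eq_div_iff]
    · ring
    · exact div_ne_zero (mul_ne_zero (Complex.exp_ne_zero _) hNne) (pow_ne_zero _ hd)
    · exact hne x
  have hD' : u x + (((k + lam) ^ 2 : ℝ):ℂ) * (starRingEnd ℂ) (u x) ≠ 0 := by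
    rw [← hm]; exact hne x
  rw [hw, aux_im (u x) ((k + lam) ^ 2) k hD']
  have habs : Complex.normSq (u x) = ‖c‖ ^ 2 := by
    rw [hu x, Complex.normSq_mul, ← Complex.sq_norm, ← Complex.sq_norm, Complex.norm_exp]
    have hre : (2 * Complex.I * (k:ℂ) * x + 4 * Complex.I * (k:ℂ) * (lam:ℂ) * t).re = 0 := by
      simp [Complex.mul_re, Complex.mul_im]
    rw [hre, Real.exp_zero]
    ring
  have hden : (‖(u x + ((k : ℂ) + (lam : ℂ)) ^ 2 * (starRingEnd ℂ) (u x))‖) ^ 2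
      = Complex.normSq (u x + (((k + lam) ^ 2 : ℝ):ℂ) * (starRingEnd ℂ) (u x)) := by
    rw [Complex.sq_norm, hm]
  rw [habs, hden]
  have hnum : 2 * k * (1 - ((k + lam) ^ 2) ^ 2) * ‖c‖ ^ 2
      = -4 * k * lam * ‖c‖ ^ 2 * (k + lam) * (1 + (k + lam) ^ 2) := by
    linear_combination (-2 * k * (1 + (k + lam) ^ 2) * (‖c‖) ^ 2) * hk2
  rw [hnum]
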